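/- Let A, B, C, D ⊂ X be nonempty dually K-bounded sets with cl(Ã + D̃) = cl(B̃ + C̃) (i.e., ⟨Ã,B̃⟩ = ⟨C̃,D̃⟩ in the Rådström space). Then the Hausdorff–Pompeiu distances agree: h(Ã, B̃) = h(C̃, D̃) (with values in [0,∞]). -/

import Mathlib

open Pointwise

section Aux

variable {X : Type*} [NormedAddCommGroup X] [NormedSpace ℝ X]

private lemma KaddK (K : Set X) (hKconv : Convex ℝ K)
    (hKcone : ∀ t : ℝ, 0 ≤ t → ∀ y ∈ K, t • y ∈ K) : K + K ⊆ K := by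
  rintro x ⟨k₁, hk₁, k₂, hk₂, rfl⟩
  have hmid : (1/2 : ℝ) • k₁ + (1/2 : ℝ) • k₂ ∈ K :=
    hKconv hk₁ hk₂ (by norm_num) (by norm_num) (by norm_num)
  have := hKcone 2 (by norm_num) _ hmid
  have h2 : (2:ℝ) • ((1/2 : ℝ) • k₁ + (1/2 : ℝ) • k₂) = k₁ + k₂ := by
    rw [smul_add, smul_smul, smul_smul]; norm_num
  rwa [h2] at this

private lemma tilde_addK (K : Set X) (hKconv : Convex ℝ K)
    (hKcone : ∀ t : ℝ, 0 ≤ t → ∀ y ∈ K, t • y ∈ K) (S : Set X) :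
    ∀ x ∈ closure (convexHull ℝ (S + K)), ∀ k ∈ K, x + k ∈ closure (convexHull ℝ (S + K)) := by
  have hconv : ∀ y ∈ convexHull ℝ (S + K), ∀ k ∈ K, y + k ∈ convexHull ℝ (S + K) := by
    intro y hy k hk
    have hk' : k ∈ convexHull ℝ K := subset_convexHull ℝ K hk
    have : y + k ∈ convexHull ℝ (S + K) + convexHull ℝ K := Set.add_mem_add hy hk'
    rw [← convexHull_add] at this
    refine convexHull_mono ?_ this
    rw [add_assoc]
    exact Set.add_subset_add_left (KaddK K hKconv hKcone)
  intro x hx k hk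
  have hcont : Continuous (fun y : X => y + k) := continuous_id.add continuous_const
  have : x + k ∈ closure ((fun y : X => y + k) '' convexHull ℝ (S + K)) :=
    (image_closure_subset_closure_image hcont) ⟨x, hx, rfl⟩
  refine closure_mono ?_ this
  rintro _ ⟨y, hy, rfl⟩
  exact hconv y hy k hk

private lemma tilde_lb (K : Set X) (S : Set X) (g : X →L[ℝ] ℝ)
    (hgK : ∀ k ∈ K, 0 ≤ g k) (c : ℝ) (hc : ∀ a ∈ S, c ≤ g a) :
    ∀ x ∈ closure (convexHull ℝ (S + K)), c ≤ g x := by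
  have hset : closure (convexHull ℝ (S + K)) ⊆ {x | c ≤ g x} := by
    apply closure_minimal
    · apply convexHull_min
      · rintro _ ⟨a, ha, k, hk, rfl⟩
        have := hc a ha; have := hgK k hk
        simp only [Set.mem_setOf_eq, map_add]; linarith
      · intro x hx y hy a b ha hb hab
        simp only [Set.mem_setOf_eq, map_add, map_smul, smul_eq_mul] at *
        have h1 : a * c ≤ a * g x := mul_le_mul_of_nonneg_left hx ha
        have h2 : b * c ≤ b * g y := mul_le_mul_of_nonneg_left hy hb
        have h3 : a * c + b * c = c := by rw [← add_mul, hab, one_mul]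
        linarith
    · exact isClosed_le continuous_const g.continuous
  exact fun x hx => hset hx

private lemma cancel (K W Q : Set X) (hWcl : IsClosed W) (hWconv : Convex ℝ W)
    (hWne : W.Nonempty)
    (hWK : ∀ w ∈ W, ∀ k ∈ K, w + k ∈ W)
    (hKcone : ∀ t : ℝ, 0 ≤ t → ∀ y ∈ K, t • y ∈ K)
    (hQne : Q.Nonempty)
    (hQb : ∀ f : X →L[ℝ] ℝ, (∀ k ∈ K, f k ≤ 0) → BddAbove (f '' Q))
    (m : X) (hm : ∀ q ∈ Q, m + q ∈ closure (W + Q)) : m ∈ W := by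
  by_contra hmW
  obtain ⟨f, u, hfW, hfm⟩ := geometric_hahn_banach_closed_point hWconv hWcl hmW
  obtain ⟨w₀, hw₀⟩ := hWne
  have hfK : ∀ k ∈ K, f k ≤ 0 := by
    intro k hk
    by_contra h
    push_neg at h
    have hw₀u : f w₀ < u := hfW w₀ hw₀
    have ht : (0:ℝ) ≤ (u - f w₀) / f k := div_nonneg (by linarith) h.le
    have hmem := hWK w₀ hw₀ _ (hKcone _ ht k hk)
    have := hfW _ hmem
    rw [map_add, map_smul, smul_eq_mul, div_mul_cancel₀ _ (ne_of_gt h)] at this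
    linarith
  have hbdd := hQb f hfK
  set α := sSup (f '' Q) with hα
  have hle : ∀ q ∈ Q, f q ≤ α := fun q hq => le_csSup hbdd ⟨q, hq, rfl⟩
  have hcl : closure (W + Q) ⊆ {x | f x ≤ u + α} := by
    apply closure_minimal
    · rintro _ ⟨w, hw, q, hq, rfl⟩
      have := hfW w hw; have := hle q hq
      simp only [Set.mem_setOf_eq, map_add]; linarith
    · exact isClosed_le f.continuous continuous_const
  have key : ∀ q ∈ Q, f m + f q ≤ u + α := by
    intro q hq
    have := hcl (hm q hq)
    simpa [map_add] using this
  have hαle : α ≤ u + α - f m := by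
    apply csSup_le (hQne.image f)
    rintro _ ⟨q, hq, rfl⟩
    linarith [key q hq]
  linarith

private lemma excess_le (K : Set X) (hKconv : Convex ℝ K)
    (hKcone : ∀ t : ℝ, 0 ≤ t → ∀ y ∈ K, t • y ∈ K)
    (N P Q : Set X) (hNne : N.Nonempty)
    (hNK : ∀ x ∈ N, ∀ k ∈ K, x + k ∈ N) (hNconv : Convex ℝ N)
    (hQne : Q.Nonempty)
    (hQb : ∀ f : X →L[ℝ] ℝ, (∀ k ∈ K, f k ≤ 0) → BddAbove (f '' Q))
    (r : ENNReal) (hr : r ≠ ⊤)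
    (hPQ : ∀ p ∈ P, EMetric.infEdist p Q ≤ r)
    (m : X) (hmq : ∀ q ∈ Q, m + q ∈ closure (N + P)) :
    EMetric.infEdist m N ≤ r := by
  have hofr : ENNReal.ofReal r.toReal = r := ENNReal.ofReal_toReal hr
  apply ENNReal.le_of_forall_pos_le_add
  intro ε hε _
  set δ : ℝ := r.toReal + ε with hδ
  set W : Set X := Metric.cthickening δ N with hW
  have hWcl : IsClosed W := Metric.isClosed_cthickening
  have hWconv : Convex ℝ W := hNconv.cthickening δ
  have hNW : N ⊆ W := Metric.self_subset_cthickening N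
  have hWne : W.Nonempty := hNne.mono hNW
  have hWK : ∀ w ∈ W, ∀ k ∈ K, w + k ∈ W := by
    intro w hw k hk
    rw [hW, Metric.mem_cthickening_iff] at hw ⊢
    refine le_trans ?_ hw
    rw [EMetric.le_infEdist]
    intro n hn
    calc EMetric.infEdist (w + k) N ≤ edist (w + k) (n + k) :=
          EMetric.infEdist_le_edist_of_mem (hNK n hn k hk)
      _ = edist w n := by rw [edist_add_right]
  have hNPWQ : N + P ⊆ W + Q := by
    rintro _ ⟨n, hn, p, hp, rfl⟩
    have h1 : EMetric.infEdist p Q < ENNReal.ofReal δ := by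
      refine lt_of_le_of_lt (hPQ p hp) ?_
      rw [hδ, ENNReal.ofReal_add ENNReal.toReal_nonneg (le_of_lt (by exact_mod_cast hε)), hofr]
      exact ENNReal.lt_add_right hr (by simpa using hε.ne')
    obtain ⟨q, hq, hdq⟩ := EMetric.infEdist_lt_iff.1 h1
    refine ⟨n + (p - q), ?_, q, hq, by abel⟩
    rw [hW, Metric.mem_cthickening_iff]
    calc EMetric.infEdist (n + (p - q)) N ≤ edist (n + (p - q)) n :=
          EMetric.infEdist_le_edist_of_mem hn
      _ = edist p q := by
          rw [edist_eq_enorm_sub, edist_eq_enorm_sub]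
          congr 1; abel
      _ ≤ ENNReal.ofReal δ := hdq.le
  have hmW : m ∈ W := by
    refine cancel K W Q hWcl hWconv hWne hWK hKcone hQne hQb m ?_
    intro q hq
    exact (closure_mono hNPWQ) (hmq q hq)
  rw [hW, Metric.mem_cthickening_iff] at hmW
  calc EMetric.infEdist m N ≤ ENNReal.ofReal δ := hmW
    _ = r + ENNReal.ofReal ε := by
        rw [hδ, ENNReal.ofReal_add ENNReal.toReal_nonneg (le_of_lt (by exact_mod_cast hε)), hofr]
    _ = r + ε := by rw [ENNReal.ofReal_coe_nnreal]

private lemma tilde_facts (K : Set X) (hKconv : Convex ℝ K) (hK0 : (0:X) ∈ K)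
    (hKcone : ∀ t : ℝ, 0 ≤ t → ∀ y ∈ K, t • y ∈ K)
    (S : Set X) (hS : S.Nonempty) :
    (closure (convexHull ℝ (S + K))).Nonempty := by
  obtain ⟨s, hs⟩ := hS
  exact ⟨s, subset_closure (subset_convexHull ℝ _ ⟨s, hs, 0, hK0, add_zero s⟩)⟩

private lemma tilde_bddAbove (K : Set X) (S : Set X)
    (hdb : ∀ f : X →L[ℝ] ℝ, (∀ k ∈ K, 0 ≤ f k) → BddBelow (f '' S)) :
    ∀ f : X →L[ℝ] ℝ, (∀ k ∈ K, f k ≤ 0) →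
      BddAbove (f '' closure (convexHull ℝ (S + K))) := by
  intro f hf
  obtain ⟨c, hc⟩ := hdb (-f) (fun k hk => by simpa using hf k hk)
  have hc' : ∀ a ∈ S, c ≤ (-f) a := fun a ha => hc ⟨a, ha, rfl⟩
  have := tilde_lb K S (-f) (fun k hk => by simpa using hf k hk) c hc'
  refine ⟨-c, ?_⟩
  rintro _ ⟨x, hx, rfl⟩
  have := this x hx
  simp only [ContinuousLinearMap.neg_apply] at this
  linarith

private lemma h_le (K : Set X) (hKconv : Convex ℝ K) (hK0 : (0:X) ∈ K)
    (hKcone : ∀ t : ℝ, 0 ≤ t → ∀ y ∈ K, t • y ∈ K)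
    (A B C D : Set X)
    (hA : A.Nonempty) (hB : B.Nonempty) (hC : C.Nonempty) (hD : D.Nonempty)
    (hdbC : ∀ f : X →L[ℝ] ℝ, (∀ k ∈ K, 0 ≤ f k) → BddBelow (f '' C))
    (hdbD : ∀ f : X →L[ℝ] ℝ, (∀ k ∈ K, 0 ≤ f k) → BddBelow (f '' D))
    (hequiv : closure (closure (convexHull ℝ (A + K)) + closure (convexHull ℝ (D + K))) =
      closure (closure (convexHull ℝ (B + K)) + closure (convexHull ℝ (C + K)))) :
    EMetric.hausdorffEdist (closure (convexHull ℝ (A + K))) (closure (convexHull ℝ (B + K))) ≤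
      EMetric.hausdorffEdist (closure (convexHull ℝ (C + K))) (closure (convexHull ℝ (D + K))) := by
  set M := closure (convexHull ℝ (A + K))
  set N := closure (convexHull ℝ (B + K))
  set P := closure (convexHull ℝ (C + K))
  set Q := closure (convexHull ℝ (D + K))
  set r := EMetric.hausdorffEdist P Q with hr
  rcases eq_or_ne r ⊤ with htop | htop
  · exact le_top.trans_eq htop.symm
  apply EMetric.hausdorffEdist_le_of_infEdist
  · -- ∀ m ∈ M, infEdist m N ≤ r
    intro m hm
    refine excess_le K hKconv hKcone N P Q (tilde_facts K hKconv hK0 hKcone B hB)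
      (tilde_addK K hKconv hKcone B) (convex_convexHull ℝ _).closure
      (tilde_facts K hKconv hK0 hKcone D hD)
      (tilde_bddAbove K D hdbD) r htop
      (fun p hp => EMetric.infEdist_le_hausdorffEdist_of_mem hp) m ?_
    intro q hq
    have : m + q ∈ closure (M + Q) := subset_closure (Set.add_mem_add hm hq)
    rwa [hequiv] at this
  · -- ∀ n ∈ N, infEdist n M ≤ r
    intro n hn
    refine excess_le K hKconv hKcone M Q P (tilde_facts K hKconv hK0 hKcone A hA)
      (tilde_addK K hKconv hKcone A) (convex_convexHull ℝ _).closure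
      (tilde_facts K hKconv hK0 hKcone C hC)
      (tilde_bddAbove K C hdbC) r htop
      (fun q hq => by
        rw [hr]; show EMetric.infEdist q P ≤ Metric.hausdorffEDist P Q; rw [Metric.hausdorffEDist_comm]
        exact EMetric.infEdist_le_hausdorffEdist_of_mem hq) n ?_
    intro p hp
    have : n + p ∈ closure (N + P) := subset_closure (Set.add_mem_add hn hp)
    rwa [← hequiv] at this

end Aux

/-- The Hausdorff–Pompeiu (extended) distance is well defined on the Rådström space
of dually K-bounded sets: equivalent pairs have equal Hausdorff distances. -/
theorem hausdorff_dist_well_defined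
    {X : Type*} [NormedAddCommGroup X] [NormedSpace ℝ X]
    (K : Set X) (hKcl : IsClosed K) (hKconv : Convex ℝ K)
    (hK0 : (0 : X) ∈ K)
    (hKcone : ∀ t : ℝ, 0 ≤ t → ∀ y ∈ K, t • y ∈ K)
    (A B C D : Set X)
    (hA : A.Nonempty) (hB : B.Nonempty) (hC : C.Nonempty) (hD : D.Nonempty)
    (hdbA : ∀ f : X →L[ℝ] ℝ, (∀ k ∈ K, 0 ≤ f k) → BddBelow (f '' A))
    (hdbB : ∀ f : X →L[ℝ] ℝ, (∀ k ∈ K, 0 ≤ f k) → BddBelow (f '' B))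
    (hdbC : ∀ f : X →L[ℝ] ℝ, (∀ k ∈ K, 0 ≤ f k) → BddBelow (f '' C))
    (hdbD : ∀ f : X →L[ℝ] ℝ, (∀ k ∈ K, 0 ≤ f k) → BddBelow (f '' D))
    (hequiv : closure (closure (convexHull ℝ (A + K)) + closure (convexHull ℝ (D + K))) =
      closure (closure (convexHull ℝ (B + K)) + closure (convexHull ℝ (C + K)))) :
    EMetric.hausdorffEdist (closure (convexHull ℝ (A + K))) (closure (convexHull ℝ (B + K))) =
      EMetric.hausdorffEdist (closure (convexHull ℝ (C + K))) (closure (convexHull ℝ (D + K))) := by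
  have h1 := h_le K hKconv hK0 hKcone A B C D hA hB hC hD hdbC hdbD hequiv
  have hequiv' : closure (closure (convexHull ℝ (C + K)) + closure (convexHull ℝ (B + K))) =
      closure (closure (convexHull ℝ (D + K)) + closure (convexHull ℝ (A + K))) := by
    rw [add_comm (closure (convexHull ℝ (C + K))), add_comm (closure (convexHull ℝ (D + K)))]
    exact hequiv.symm
  have h2 := h_le K hKconv hK0 hKcone C D A B hC hD hA hB hdbA hdbB hequiv'
  exact le_antisymm h1 h2
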